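/- For the ECO-system with axiom (2) and rule (k) ↝ (k)(k+1)^{k-1}, the number of nodes at level n whose label is k+2 equals k!·binom(n,k), and the exponential generating function of the total counts f_n is e^z/(1-z); in particular f_n = ∑_{k=0}^n n!/k! and f_n ~ e·n!. -/

import Mathlib

open PowerSeries

/-- for the ECO-system with axiom (2) and rule (k) ↝ (k)(k+1)^{k-1}
(arrangements), the number of nodes at level n labeled k+2 is k!·binom(n,k), the
total count is t n = ∑_{k≤n} n!/k!, the exponential generating function of t is
e^z/(1-z), and t n ~ e·n!. -/
theorem stmt_15 (f : ℕ → ℕ → ℕ)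
    (h0 : ∀ k, f 0 k = if k = 2 then 1 else 0)
    (hstep : ∀ n k, f (n + 1) k = f n k + (k - 2) * f n (k - 1))
    (t : ℕ → ℕ) (ht : ∀ n, t n = ∑ k ∈ Finset.range (n + 3), f n k) :
    (∀ n k, f n (k + 2) = Nat.factorial k * Nat.choose n k) ∧
    (∀ n, t n = ∑ k ∈ Finset.range (n + 1), Nat.factorial n / Nat.factorial k) ∧
    ((1 - X) * mk (fun n => (t n : ℚ) / (Nat.factorial n : ℚ)) = exp ℚ) ∧
    Filter.Tendsto (fun n => (t n : ℝ) / (Nat.factorial n : ℝ))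
      Filter.atTop (nhds (Real.exp 1)) := by
  have hf : ∀ n k, f n (k + 2) = Nat.factorial k * Nat.choose n k := by
    intro n
    induction n with
    | zero =>
      intro k
      rw [h0]
      cases k with
      | zero => simp
      | succ m => simp [Nat.succ_ne_zero]
    | succ n ih =>
      intro k
      rw [hstep]
      cases k with
      | zero => simp [ih 0]
      | succ m =>
        have h1 : (m + 1 + 2 - 2) = m + 1 := by omega
        have h2 : (m + 1 + 2 - 1) = m + 2 := by omega
        rw [h1, h2, ih (m + 1), ih m, Nat.choose_succ_succ n m,
          Nat.mul_add, Nat.factorial_succ]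
        ring
  have hlow : ∀ n, f n 0 = 0 ∧ f n 1 = 0 := by
    intro n
    induction n with
    | zero => simp [h0]
    | succ n ih =>
      refine ⟨?_, ?_⟩
      · rw [hstep]; simp [ih.1]
      · rw [hstep]; simp [ih.2]
  have hdiv : ∀ {n k : ℕ}, k ≤ n →
      Nat.factorial n / Nat.factorial (n - k) = Nat.factorial k * Nat.choose n k := by
    intro n k h
    have h1 := Nat.choose_mul_factorial_mul_factorial h
    refine Nat.div_eq_of_eq_mul_left (Nat.factorial_pos _) ?_
    rw [← h1]; ring
  have ht2 : ∀ n, t n = ∑ k ∈ Finset.range (n + 1), Nat.factorial n / Nat.factorial k := by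
    intro n
    rw [ht n, Finset.sum_range_succ', Finset.sum_range_succ', (hlow n).1, (hlow n).2,
      ← Finset.sum_range_reflect (fun j => Nat.factorial n / Nat.factorial j) (n + 1)]
    simp only [add_zero, Nat.add_sub_cancel]
    refine Finset.sum_congr rfl fun k hk => ?_
    have hkn : k ≤ n := by
      simpa [Nat.lt_succ_iff] using Finset.mem_range.mp hk
    rw [hf n k, hdiv hkn]
  -- rational/real partial-sum formulas
  have hQ : ∀ n, (t n : ℚ) / (Nat.factorial n : ℚ)
      = ∑ k ∈ Finset.range (n + 1), (1 : ℚ) / (Nat.factorial k : ℚ) := by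
    intro n
    rw [ht2 n]
    push_cast
    rw [Finset.sum_div]
    refine Finset.sum_congr rfl fun k hk => ?_
    have hkn : k ≤ n := by simpa [Nat.lt_succ_iff] using Finset.mem_range.mp hk
    have hd : Nat.factorial k ∣ Nat.factorial n := Nat.factorial_dvd_factorial hkn
    rw [Nat.cast_div hd (by exact_mod_cast (Nat.factorial_pos k).ne')]
    rw [div_right_comm, div_self (by positivity)]
  have hR : ∀ n, (t n : ℝ) / (Nat.factorial n : ℝ)
      = ∑ k ∈ Finset.range (n + 1), (1 : ℝ) / (Nat.factorial k : ℝ) := by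
    intro n
    rw [ht2 n]
    push_cast
    rw [Finset.sum_div]
    refine Finset.sum_congr rfl fun k hk => ?_
    have hkn : k ≤ n := by simpa [Nat.lt_succ_iff] using Finset.mem_range.mp hk
    have hd : Nat.factorial k ∣ Nat.factorial n := Nat.factorial_dvd_factorial hkn
    rw [Nat.cast_div hd (by exact_mod_cast (Nat.factorial_pos k).ne')]
    rw [div_right_comm, div_self (by positivity)]
  refine ⟨hf, ht2, ?_, ?_⟩
  · -- generating function identity
    ext n
    rw [sub_mul, one_mul, map_sub, coeff_exp]
    cases n with
    | zero =>
      have h : t 0 = 1 := by rw [ht2 0]; simp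
      simp [h]
    | succ n =>
      rw [coeff_succ_X_mul, coeff_mk, coeff_mk, hQ (n + 1), hQ n,
        Finset.sum_range_succ _ (n + 1)]
      simp
  · -- asymptotics
    have hs : HasSum (fun k : ℕ => (1 : ℝ) / (Nat.factorial k : ℝ)) (Real.exp 1) := by
      have := NormedSpace.expSeries_div_hasSum_exp (1 : ℝ)
      simpa [Real.exp_eq_exp_ℝ, one_pow] using this
    have h1 := hs.tendsto_sum_nat.comp (Filter.tendsto_add_atTop_nat 1)
    refine h1.congr fun n => ?_
    simp [hR n, Function.comp]
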